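/- Let G be a simple graph with a proper (Δ(G)+1)-edge coloring α, and let u be a vertex. If the fan X_u(α,v) = (ux_0, ..., ux_p) is a comet in D_u(α), i.e., p ≥ 2 and m_α(x_p) = α(ux_q) for some 1 ≤ q ≤ p−1, then there is a proper (Δ(G)+1)-edge coloring α' Kempe-equivalent to α such that the color class of color α(ux_0) under α' equals the color class of α(ux_0) under α with the edge ux_0 removed (assuming α(ux_0) differs from all other colors α(ux_1),...,α(ux_p) and from m_α(u)). -/

import Mathlib

open SimpleGraph

/-- A proper edge coloring: edges of `G` sharing a vertex get different colors. -/
def IsProperEdgeColoring {V : Type*} (G : SimpleGraph V) {t : ℕ} (c : Sym2 V → Fin t) : Prop :=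
  ∀ e₁ ∈ G.edgeSet, ∀ e₂ ∈ G.edgeSet, e₁ ≠ e₂ → (∃ v, v ∈ e₁ ∧ v ∈ e₂) → c e₁ ≠ c e₂

/-- The chromatic index: least number of colors in a proper edge coloring. -/
noncomputable def chromaticIndex {V : Type*} (G : SimpleGraph V) : ℕ :=
  sInf {t | ∃ c : Sym2 V → Fin t, IsProperEdgeColoring G c}

/-- Color `c` is missing at vertex `w` under coloring `α`. -/
def MissingAt {V : Type*} (G : SimpleGraph V) {t : ℕ} (α : Sym2 V → Fin t) (c : Fin t)
    (w : V) : Prop :=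
  ∀ e ∈ G.edgeSet, w ∈ e → α e ≠ c

/-- The subgraph `K_α(a,b)` induced by the edges colored `a` or `b`. -/
def bicolored {V : Type*} (G : SimpleGraph V) {t : ℕ} (α : Sym2 V → Fin t) (a b : Fin t) :
    SimpleGraph V :=
  SimpleGraph.fromEdgeSet {e | e ∈ G.edgeSet ∧ (α e = a ∨ α e = b)}

/-- `β` is obtained from `α` by a single Kempe change: swapping two colors `a`, `b` on a
connected component of the bicolored subgraph `K_α(a,b)`. -/
def IsKempeSwap {V : Type*} (G : SimpleGraph V) {t : ℕ} (α β : Sym2 V → Fin t) : Prop :=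
  ∃ a b : Fin t, ∃ C : (bicolored G α a b).ConnectedComponent,
    (∀ e ∈ G.edgeSet, (α e = a ∨ α e = b) →
      (∀ v ∈ e, (bicolored G α a b).connectedComponentMk v = C) →
      ((α e = a ∧ β e = b) ∨ (α e = b ∧ β e = a))) ∧
    (∀ e : Sym2 V, (e ∉ G.edgeSet ∨ (α e ≠ a ∧ α e ≠ b) ∨
        ∃ v ∈ e, (bicolored G α a b).connectedComponentMk v ≠ C) → β e = α e)

/-- Kempe equivalence: reachability by a sequence of Kempe changes. -/
def KempeEquiv {V : Type*} (G : SimpleGraph V) {t : ℕ} (α β : Sym2 V → Fin t) : Prop :=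
  Relation.ReflTransGen (IsKempeSwap G) α β

/-- `G` is chordless: in every cycle, any two nonconsecutive vertices are nonadjacent. -/
def Chordless {V : Type*} (G : SimpleGraph V) : Prop :=
  ∀ n : ℕ, 3 ≤ n → ∀ c : ZMod n → V, Function.Injective c →
    (∀ i, G.Adj (c i) (c (i + 1))) →
    ∀ i j : ZMod n, j ≠ i → j ≠ i + 1 → i ≠ j + 1 → ¬ G.Adj (c i) (c j)

/-- An `α`-fan at `u`: edges `u x₀, …, u xₚ` with `m i` a color missing at `x i`
and `α (u x_{i+1}) = m i`. -/
structure IsFan {V : Type*} (G : SimpleGraph V) {t : ℕ} (α : Sym2 V → Fin t)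
    (u : V) (p : ℕ) (x : ℕ → V) (m : ℕ → Fin t) : Prop where
  adj : ∀ i ≤ p, G.Adj u (x i)
  inj : ∀ i ≤ p, ∀ j ≤ p, x i = x j → i = j
  missing : ∀ i ≤ p, MissingAt G α (m i) (x i)
  succ : ∀ i < p, α s(u, x (i + 1)) = m i

/-- The coloring `X_u^{-1}(α,v)`: each fan edge `u xᵢ` is recolored with `m i`,
all other edges keep their color. -/
def IsFanRecolor {V : Type*} {t : ℕ} (α : Sym2 V → Fin t)
    (u : V) (p : ℕ) (x : ℕ → V) (m : ℕ → Fin t) (β : Sym2 V → Fin t) : Prop :=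
  (∀ i ≤ p, β s(u, x i) = m i) ∧ (∀ e : Sym2 V, (∀ i ≤ p, e ≠ s(u, x i)) → β e = α e)

/-- A cycle fan is saturated if for every `i` the component of `K_α(α(u xᵢ), m_α(u))`
containing `u` also contains `x_{i-1}` (cyclically). -/
def SaturatedCycleFan {V : Type*} (G : SimpleGraph V) {t : ℕ} (α : Sym2 V → Fin t)
    (u : V) (p : ℕ) (x : ℕ → V) (mu : Fin t) : Prop :=
  ∀ i ≤ p, (bicolored G α (α s(u, x i)) mu).connectedComponentMk u =
    (bicolored G α (α s(u, x i)) mu).connectedComponentMk (x (if i = 0 then p else i - 1))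

section VizingHelpers

open scoped Classical

variable {V : Type*} {t : ℕ} {G : SimpleGraph V}

lemma edge_unique {α : Sym2 V → Fin t} (hα : IsProperEdgeColoring G α) {e₁ e₂ : Sym2 V}
    (h₁ : e₁ ∈ G.edgeSet) (h₂ : e₂ ∈ G.edgeSet) {v : V} (hv₁ : v ∈ e₁) (hv₂ : v ∈ e₂)
    (hc : α e₁ = α e₂) : e₁ = e₂ := by
  by_contra hne
  exact hα e₁ h₁ e₂ h₂ hne ⟨v, hv₁, hv₂⟩ hc

lemma bicolored_adj (α : Sym2 V → Fin t) (a b : Fin t) (v w : V) :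
    (bicolored G α a b).Adj v w ↔
      (s(v, w) ∈ G.edgeSet ∧ (α s(v, w) = a ∨ α s(v, w) = b)) ∧ v ≠ w := by
  rw [bicolored, SimpleGraph.fromEdgeSet_adj]
  rfl

lemma comp_eq_of_edge {α : Sym2 V → Fin t} {a b : Fin t} {e : Sym2 V}
    (he : e ∈ G.edgeSet) (hc : α e = a ∨ α e = b) {v w : V} (hv : v ∈ e) (hw : w ∈ e) :
    (bicolored G α a b).connectedComponentMk v = (bicolored G α a b).connectedComponentMk w := by
  induction e using Sym2.ind with
  | _ p q =>
    have hpq : p ≠ q := by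
      intro h; subst h
      exact (G.not_isDiag_of_mem_edgeSet he) (by simp)
    have hadj : (bicolored G α a b).Adj p q := (bicolored_adj α a b p q).mpr ⟨⟨he, hc⟩, hpq⟩
    have hr : (bicolored G α a b).connectedComponentMk p
        = (bicolored G α a b).connectedComponentMk q :=
      SimpleGraph.ConnectedComponent.eq.mpr hadj.reachable
    rw [Sym2.mem_iff] at hv hw
    rcases hv with rfl | rfl <;> rcases hw with rfl | rfl
    exacts [rfl, hr, hr.symm, rfl]

/-- The condition for an edge to be recolored by the Kempe swap. -/
def swapCond (G : SimpleGraph V) (α : Sym2 V → Fin t) (a b : Fin t)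
    (C : (bicolored G α a b).ConnectedComponent) (e : Sym2 V) : Prop :=
  e ∈ G.edgeSet ∧ (α e = a ∨ α e = b) ∧
    ∀ v ∈ e, (bicolored G α a b).connectedComponentMk v = C

/-- The coloring obtained by swapping colors `a`, `b` on the component `C`. -/
noncomputable def swapCol (G : SimpleGraph V) (α : Sym2 V → Fin t) (a b : Fin t)
    (C : (bicolored G α a b).ConnectedComponent) : Sym2 V → Fin t := fun e =>
  if swapCond G α a b C e then (if α e = a then b else a) else α e

variable {α : Sym2 V → Fin t} {a b : Fin t} {C : (bicolored G α a b).ConnectedComponent}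

lemma swapCol_eq_of_not {e : Sym2 V} (h : ¬ swapCond G α a b C e) :
    swapCol G α a b C e = α e := by
  rw [swapCol, if_neg h]

lemma swapCol_swapped (hab : a ≠ b) {e : Sym2 V} (h : swapCond G α a b C e) :
    (α e = a ∧ swapCol G α a b C e = b) ∨ (α e = b ∧ swapCol G α a b C e = a) := by
  rw [swapCol, if_pos h]
  rcases h.2.1 with h' | h'
  · exact Or.inl ⟨h', by rw [if_pos h']⟩
  · have hne : ¬ α e = a := fun hh => hab (hh.symm.trans h')
    exact Or.inr ⟨h', by rw [if_neg hne]⟩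

lemma swapCol_mem_region {e : Sym2 V} (h1 : e ∈ G.edgeSet) (h2 : α e = a ∨ α e = b)
    {v : V} (hv : v ∈ e) (hC : (bicolored G α a b).connectedComponentMk v = C) :
    ∀ w ∈ e, (bicolored G α a b).connectedComponentMk w = C := by
  intro w hw
  rw [← comp_eq_of_edge h1 h2 hv hw]
  exact hC

lemma swapCol_isKempeSwap (hab : a ≠ b) : IsKempeSwap G α (swapCol G α a b C) := by
  refine ⟨a, b, C, ?_, ?_⟩
  · intro e he hc hall
    exact swapCol_swapped hab ⟨he, hc, hall⟩
  · intro e hdisj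
    apply swapCol_eq_of_not
    rintro ⟨h1, h2, h3⟩
    rcases hdisj with h | h | ⟨v, hv, hvc⟩
    · exact h h1
    · rcases h2 with h2 | h2
      · exact h.1 h2
      · exact h.2 h2
    · exact hvc (h3 v hv)

lemma swapCol_proper (hα : IsProperEdgeColoring G α) (hab : a ≠ b) :
    IsProperEdgeColoring G (swapCol G α a b C) := by
  intro e₁ h₁ e₂ h₂ hne hsh
  obtain ⟨v, hv₁, hv₂⟩ := hsh
  by_cases c₁ : swapCond G α a b C e₁ <;> by_cases c₂ : swapCond G α a b C e₂
  · have hne' : α e₁ ≠ α e₂ := hα e₁ h₁ e₂ h₂ hne ⟨v, hv₁, hv₂⟩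
    rcases swapCol_swapped hab c₁ with ⟨p₁, q₁⟩ | ⟨p₁, q₁⟩ <;>
      rcases swapCol_swapped hab c₂ with ⟨p₂, q₂⟩ | ⟨p₂, q₂⟩
    · exact absurd (p₁.trans p₂.symm) hne'
    · rw [q₁, q₂]; exact hab.symm
    · rw [q₁, q₂]; exact hab
    · exact absurd (p₁.trans p₂.symm) hne'
  · have hnc : α e₂ ≠ a ∧ α e₂ ≠ b := by
      constructor <;> intro hcol <;>
        exact c₂ ⟨h₂, by simp [hcol],
          swapCol_mem_region h₂ (by simp [hcol]) hv₂ (c₁.2.2 v hv₁)⟩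
    rw [swapCol_eq_of_not c₂]
    rcases swapCol_swapped hab c₁ with ⟨_, q₁⟩ | ⟨_, q₁⟩
    · rw [q₁]; exact fun h => hnc.2 h.symm
    · rw [q₁]; exact fun h => hnc.1 h.symm
  · have hnc : α e₁ ≠ a ∧ α e₁ ≠ b := by
      constructor <;> intro hcol <;>
        exact c₁ ⟨h₁, by simp [hcol],
          swapCol_mem_region h₁ (by simp [hcol]) hv₁ (c₂.2.2 v hv₂)⟩
    rw [swapCol_eq_of_not c₁]
    rcases swapCol_swapped hab c₂ with ⟨_, q₂⟩ | ⟨_, q₂⟩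
    · rw [q₂]; exact fun h => hnc.2 h
    · rw [q₂]; exact fun h => hnc.1 h
  · rw [swapCol_eq_of_not c₁, swapCol_eq_of_not c₂]
    exact hα e₁ h₁ e₂ h₂ hne ⟨v, hv₁, hv₂⟩

lemma swapCol_untouched {v : V} (hv : (bicolored G α a b).connectedComponentMk v ≠ C)
    {e : Sym2 V} (he : v ∈ e) : swapCol G α a b C e = α e :=
  swapCol_eq_of_not (by rintro ⟨h1, h2, h3⟩; exact hv (h3 v he))

lemma swapCol_missing_untouched {v : V} (hv : (bicolored G α a b).connectedComponentMk v ≠ C)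
    {d : Fin t} (hd : MissingAt G α d v) : MissingAt G (swapCol G α a b C) d v := by
  intro e he hve
  rw [swapCol_untouched hv hve]
  exact hd e he hve

lemma swapCol_missing_of_ne (hab : a ≠ b) {d : Fin t} {v : V} (hd : MissingAt G α d v)
    (hda : d ≠ a) (hdb : d ≠ b) : MissingAt G (swapCol G α a b C) d v := by
  intro e he hve
  by_cases hc : swapCond G α a b C e
  · rcases swapCol_swapped hab hc with ⟨_, h⟩ | ⟨_, h⟩
    · rw [h]; exact hdb.symm
    · rw [h]; exact hda.symm
  · rw [swapCol_eq_of_not hc]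
    exact hd e he hve

lemma swapCol_missing_swap (hab : a ≠ b) {v : V}
    (hv : (bicolored G α a b).connectedComponentMk v = C) (hmiss : MissingAt G α a v) :
    MissingAt G (swapCol G α a b C) b v := by
  intro e he hve
  by_cases hc : swapCond G α a b C e
  · rcases swapCol_swapped hab hc with ⟨ha', _⟩ | ⟨_, hb'⟩
    · exact absurd ha' (hmiss e he hve)
    · rw [hb']; exact hab
  · rw [swapCol_eq_of_not hc]
    intro hb'
    exact hc ⟨he, Or.inr hb', swapCol_mem_region he (Or.inr hb') hve hv⟩

lemma swapCol_cases (e : Sym2 V) :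
    swapCol G α a b C e = α e ∨
      ((α e = a ∨ α e = b) ∧ (swapCol G α a b C e = a ∨ swapCol G α a b C e = b)) := by
  by_cases hc : swapCond G α a b C e
  · right
    refine ⟨hc.2.1, ?_⟩
    rw [swapCol, if_pos hc]
    by_cases h : α e = a
    · rw [if_pos h]; exact Or.inr rfl
    · rw [if_neg h]; exact Or.inl rfl
  · exact Or.inl (swapCol_eq_of_not hc)

end VizingHelpers

section VizingHelpers2

open scoped Classical

variable {V : Type*} {t : ℕ} {G : SimpleGraph V}

lemma closed_reach {H : SimpleGraph V} {S : Set V}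
    (hS : ∀ v ∈ S, ∀ w, H.Adj v w → w ∈ S) :
    ∀ {a b : V}, H.Walk a b → a ∈ S → b ∈ S := by
  intro a b W
  induction W with
  | nil => exact id
  | cons h p ih => exact fun ha => ih (hS _ ha _ h)

lemma single_update {α : Sym2 V → Fin t} (hα : IsProperEdgeColoring G α) {u w : V}
    (huw : G.Adj u w) {b : Fin t} (hu : MissingAt G α b u) (hw : MissingAt G α b w) :
    IsKempeSwap G α (Function.update α s(u, w) b) ∧
      IsProperEdgeColoring G (Function.update α s(u, w) b) := by
  have hedge : s(u, w) ∈ G.edgeSet := (SimpleGraph.mem_edgeSet _).mpr huw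
  have hab : α s(u, w) ≠ b := hu _ hedge (Sym2.mem_mk_left u w)
  have hne : u ≠ w := huw.ne
  have hmkw : (bicolored G α (α s(u, w)) b).connectedComponentMk w
      = (bicolored G α (α s(u, w)) b).connectedComponentMk u :=
    (comp_eq_of_edge hedge (Or.inl rfl) (Sym2.mem_mk_left u w) (Sym2.mem_mk_right u w)).symm
  have hclosed : ∀ v ∈ ({u, w} : Set V), ∀ y,
      (bicolored G α (α s(u, w)) b).Adj v y → y ∈ ({u, w} : Set V) := by
    intro v hv y hadj
    rw [bicolored_adj] at hadj
    obtain ⟨⟨hey, hcy⟩, hney⟩ := hadj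
    rcases hv with rfl | rfl
    · rcases hcy with hcy | hcy
      · have : s(v, y) = s(v, w) :=
          edge_unique hα hey hedge (Sym2.mem_mk_left v y) (Sym2.mem_mk_left v w) hcy
        exact Or.inr (Sym2.congr_right.mp this)
      · exact absurd hcy (hu _ hey (Sym2.mem_mk_left v y))
    · rcases hcy with hcy | hcy
      · have h' : s(v, y) = s(u, v) :=
          edge_unique hα hey hedge (Sym2.mem_mk_left v y) (Sym2.mem_mk_right u v) hcy
        rcases Sym2.eq_iff.mp h' with ⟨h1, h2⟩ | ⟨h1, h2⟩
        · exact Or.inl (h2.trans h1)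
        · exact Or.inl h2
      · exact absurd hcy (hw _ hey (Sym2.mem_mk_left v y))
  have hcomp : ∀ v, (bicolored G α (α s(u, w)) b).connectedComponentMk v
      = (bicolored G α (α s(u, w)) b).connectedComponentMk u → v = u ∨ v = w := by
    intro v hv
    have hreach : (bicolored G α (α s(u, w)) b).Reachable u v :=
      SimpleGraph.ConnectedComponent.eq.mp hv.symm
    obtain ⟨W⟩ := hreach
    exact closed_reach hclosed W (Or.inl rfl)
  constructor
  · refine ⟨α s(u, w), b, (bicolored G α (α s(u, w)) b).connectedComponentMk u, ?_, ?_⟩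
    · intro e he hc hall
      have heq : e = s(u, w) := by
        induction e using Sym2.ind with
        | _ p' q' =>
          have hp := hcomp p' (hall p' (Sym2.mem_mk_left p' q'))
          have hq := hcomp q' (hall q' (Sym2.mem_mk_right p' q'))
          have hpq : p' ≠ q' := by
            intro h; subst h
            exact (G.not_isDiag_of_mem_edgeSet he) (by simp)
          rcases hp with rfl | rfl <;> rcases hq with rfl | rfl
          · exact absurd rfl hpq
          · rfl
          · exact Sym2.eq_swap
          · exact absurd rfl hpq
      subst heq
      exact Or.inl ⟨rfl, Function.update_self _ _ _⟩
    · intro e hd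
      have hne' : e ≠ s(u, w) := by
        rintro rfl
        rcases hd with h | h | ⟨v, hv, hvc⟩
        · exact h hedge
        · exact h.1 rfl
        · rcases Sym2.mem_iff.mp hv with rfl | rfl
          · exact hvc rfl
          · exact hvc hmkw
      exact Function.update_of_ne hne' _ _
  · intro e₁ h₁ e₂ h₂ hne12 hsh
    obtain ⟨v, hv₁, hv₂⟩ := hsh
    by_cases he₁ : e₁ = s(u, w) <;> by_cases he₂ : e₂ = s(u, w)
    · exact absurd (he₁.trans he₂.symm) hne12
    · subst he₁
      rw [Function.update_self, Function.update_of_ne he₂]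
      rcases Sym2.mem_iff.mp hv₁ with rfl | rfl
      · exact fun h => (hu e₂ h₂ hv₂) h.symm
      · exact fun h => (hw e₂ h₂ hv₂) h.symm
    · subst he₂
      rw [Function.update_self, Function.update_of_ne he₁]
      rcases Sym2.mem_iff.mp hv₂ with rfl | rfl
      · exact fun h => (hu e₁ h₁ hv₁) h
      · exact fun h => (hw e₁ h₁ hv₁) h
    · rw [Function.update_of_ne he₁, Function.update_of_ne he₂]
      exact hα e₁ h₁ e₂ h₂ hne12 ⟨v, hv₁, hv₂⟩

lemma downshift (G : SimpleGraph V) (u : V) :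
    ∀ (k : ℕ) (β : Sym2 V → Fin t) (x : ℕ → V) (m : ℕ → Fin t),
    IsProperEdgeColoring G β → IsFan G β u k x m → MissingAt G β (m k) u →
    ∃ γ, IsProperEdgeColoring G γ ∧ KempeEquiv G β γ ∧
      (∀ i ≤ k, γ s(u, x i) = m i) ∧ ∀ e, (∀ i ≤ k, e ≠ s(u, x i)) → γ e = β e := by
  intro k
  induction k with
  | zero =>
    intro β x m hβ hfan hm
    have hadj := hfan.adj 0 le_rfl
    have hupd := single_update hβ hadj hm (hfan.missing 0 le_rfl)
    refine ⟨Function.update β s(u, x 0) (m 0), hupd.2,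
      Relation.ReflTransGen.single hupd.1, ?_, ?_⟩
    · intro i hi
      obtain rfl := Nat.le_zero.mp hi
      exact Function.update_self _ _ _
    · intro e he
      exact Function.update_of_ne (he 0 le_rfl) _ _
  | succ k ih =>
    intro β x m hβ hfan hm
    have hadj := hfan.adj (k + 1) le_rfl
    have hmx := hfan.missing (k + 1) le_rfl
    have hupd := single_update hβ hadj hm hmx
    have hxne : ∀ i ≤ k + 1, u ≠ x i := fun i hi => (hfan.adj i hi).ne
    have hedge_ne : ∀ i ≤ k, s(u, x i) ≠ s(u, x (k + 1)) := by
      intro i hi h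
      have hxx := Sym2.congr_right.mp h
      have := hfan.inj i (le_trans hi (Nat.le_succ k)) (k + 1) le_rfl hxx
      omega
    have hfan₁ : IsFan G (Function.update β s(u, x (k + 1)) (m (k + 1))) u k x m := by
      refine ⟨fun i hi => hfan.adj i (le_trans hi (Nat.le_succ k)),
        fun i hi j hj h =>
          hfan.inj i (le_trans hi (Nat.le_succ k)) j (le_trans hj (Nat.le_succ k)) h, ?_, ?_⟩
      · intro i hi e he hve
        have hene : e ≠ s(u, x (k + 1)) := by
          rintro rfl
          rcases Sym2.mem_iff.mp hve with h | h
          · exact hxne i (le_trans hi (Nat.le_succ k)) h.symm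
          · have := hfan.inj i (le_trans hi (Nat.le_succ k)) (k + 1) le_rfl h
            omega
        rw [Function.update_of_ne hene]
        exact hfan.missing i (le_trans hi (Nat.le_succ k)) e he hve
      · intro i hilt
        rw [Function.update_of_ne (hedge_ne (i + 1) (by omega))]
        exact hfan.succ i (by omega)
    have hm₁ : MissingAt G (Function.update β s(u, x (k + 1)) (m (k + 1))) (m k) u := by
      intro e he hue
      by_cases hcase : e = s(u, x (k + 1))
      · subst hcase
        rw [Function.update_self]
        intro h
        have hsucc := hfan.succ k (Nat.lt_succ_self k)
        exact hmx s(u, x (k + 1)) ((SimpleGraph.mem_edgeSet _).mpr hadj)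
          (Sym2.mem_mk_right u (x (k + 1))) (hsucc.trans h.symm)
      · rw [Function.update_of_ne hcase]
        intro h
        have hsucc := hfan.succ k (Nat.lt_succ_self k)
        exact hcase (edge_unique hβ he ((SimpleGraph.mem_edgeSet _).mpr hadj) hue
          (Sym2.mem_mk_left u (x (k + 1))) (h.trans hsucc.symm))
    obtain ⟨γ, hγp, hγe, hγfan, hγrest⟩ :=
      ih (Function.update β s(u, x (k + 1)) (m (k + 1))) x m hupd.2 hfan₁ hm₁
    refine ⟨γ, hγp, Relation.ReflTransGen.head hupd.1 hγe, ?_, ?_⟩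
    · intro i hi
      rcases Nat.lt_or_ge i (k + 1) with h | h
      · exact hγfan i (by omega)
      · have : i = k + 1 := by omega
        subst this
        rw [hγrest _ (fun j hj => (hedge_ne j hj).symm), Function.update_self]
    · intro e he
      rw [hγrest e (fun i hi => he i (by omega)),
        Function.update_of_ne (he (k + 1) le_rfl)]

lemma endpoint_nbr {H : SimpleGraph V} {b c : V} (P : H.Walk b c) (hbc : b ≠ c) :
    ∃ y, H.Adj b y ∧ y ∈ P.support := by
  cases P with
  | nil => exact absurd rfl hbc
  | cons h q' =>
    refine ⟨_, h, ?_⟩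
    rw [SimpleGraph.Walk.support_cons]
    exact List.mem_cons_of_mem _ q'.start_mem_support

lemma path_internal {H : SimpleGraph V} {b c v : V} {P : H.Walk b c} (hP : P.IsPath)
    (hv : v ∈ P.support) (hvb : v ≠ b) (hvc : v ≠ c) :
    ∃ w₁ w₂, H.Adj v w₁ ∧ H.Adj v w₂ ∧ w₁ ≠ w₂ ∧ w₁ ∈ P.support ∧ w₂ ∈ P.support := by
  obtain ⟨q, r, rfl⟩ := SimpleGraph.Walk.mem_support_iff_exists_append.mp hv
  obtain ⟨w₁, hadj₁, hw₁q⟩ : ∃ w₁, H.Adj v w₁ ∧ w₁ ∈ q.support := by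
    obtain ⟨y, hy, hymem⟩ := endpoint_nbr q.reverse hvb
    rw [SimpleGraph.Walk.support_reverse] at hymem
    exact ⟨y, hy, List.mem_reverse.mp hymem⟩
  obtain ⟨w₂, hadj₂, hw₂r⟩ : ∃ w₂, H.Adj v w₂ ∧ w₂ ∈ r.support.tail := by
    cases r with
    | nil => exact absurd rfl hvc
    | cons h r' =>
      refine ⟨_, h, ?_⟩
      rw [SimpleGraph.Walk.support_cons]
      simpa using r'.start_mem_support
  have hnodup := hP.support_nodup
  rw [SimpleGraph.Walk.support_append, List.nodup_append] at hnodup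
  refine ⟨w₁, w₂, hadj₁, hadj₂, ?_, SimpleGraph.Walk.subset_support_append_left _ _ hw₁q, ?_⟩
  · intro h
    subst h
    exact hnodup.2.2 _ hw₁q _ hw₂r rfl
  · rw [SimpleGraph.Walk.support_append]
    exact List.mem_append_right _ hw₂r

lemma no_three_leaves {H : SimpleGraph V}
    (hdeg : ∀ v y₁ y₂ y₃, H.Adj v y₁ → H.Adj v y₂ → H.Adj v y₃ → y₁ = y₂ ∨ y₁ = y₃ ∨ y₂ = y₃)
    {a b c : V} (hsa : ∀ y z, H.Adj a y → H.Adj a z → y = z)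
    (hsb : ∀ y z, H.Adj b y → H.Adj b z → y = z)
    (hsc : ∀ y z, H.Adj c y → H.Adj c z → y = z)
    (hab : a ≠ b) (hac : a ≠ c) (hbc : b ≠ c)
    (rb : H.Reachable a b) (rc : H.Reachable a c) : False := by
  classical
  obtain ⟨W⟩ := rb.symm.trans rc
  obtain ⟨P, hP⟩ := W.toPath
  have hbmem : ∃ y, H.Adj b y ∧ y ∈ P.support := endpoint_nbr P hbc
  have hcmem : ∃ y, H.Adj c y ∧ y ∈ P.support := by
    obtain ⟨y, hy, hymem⟩ := endpoint_nbr P.reverse hbc.symm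
    rw [SimpleGraph.Walk.support_reverse] at hymem
    exact ⟨y, hy, List.mem_reverse.mp hymem⟩
  have hclosed : ∀ v ∈ {v | v ∈ P.support}, ∀ w, H.Adj v w → w ∈ {v | v ∈ P.support} := by
    intro v hvmem w hw
    by_cases hb' : v = b
    · subst hb'
      obtain ⟨y, hy, hymem⟩ := hbmem
      have : w = y := hsb w y hw hy
      exact this ▸ hymem
    by_cases hc' : v = c
    · subst hc'
      obtain ⟨y, hy, hymem⟩ := hcmem
      have : w = y := hsc w y hw hy
      exact this ▸ hymem
    obtain ⟨w₁, w₂, h1, h2, hne, hm1, hm2⟩ := path_internal hP hvmem hb' hc'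
    rcases hdeg v w₁ w₂ w h1 h2 hw with h | h | h
    · exact absurd h hne
    · exact h ▸ hm1
    · exact h ▸ hm2
  have haP : a ∈ P.support := by
    obtain ⟨Wa⟩ := rb.symm
    exact closed_reach hclosed Wa (SimpleGraph.Walk.start_mem_support P)
  obtain ⟨w₁, w₂, h1, h2, hne, _, _⟩ := path_internal hP haP hab hac
  exact hne (hsa w₁ w₂ h1 h2)

end VizingHelpers2

section VizingFinish

open scoped Classical

variable {V : Type*} {t : ℕ} {G : SimpleGraph V}

lemma vizing_finish {α : Sym2 V → Fin t} (hα : IsProperEdgeColoring G α)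
    {u : V} {p : ℕ} {x : ℕ → V}
    (hdist : ∀ i, 1 ≤ i → i ≤ p → α s(u, x 0) ≠ α s(u, x i))
    {k : ℕ} (hk : k ≤ p) {m' : ℕ → Fin t} {β : Sym2 V → Fin t}
    (hβp : IsProperEdgeColoring G β) (hβe : KempeEquiv G α β)
    (hfan' : IsFan G β u k x m') (hm : MissingAt G β (m' k) u)
    (hm'c : ∀ j ≤ k, m' j ≠ α s(u, x 0))
    (hclass : ∀ e, β e = α s(u, x 0) ↔ α e = α s(u, x 0)) :
    ∃ α', IsProperEdgeColoring G α' ∧ KempeEquiv G α α' ∧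
      {e | e ∈ G.edgeSet ∧ α' e = α s(u, x 0)} =
        {e | e ∈ G.edgeSet ∧ α e = α s(u, x 0)} \ {s(u, x 0)} := by
  obtain ⟨γ, hγp, hγe, hγfan, hγrest⟩ := downshift G u k β x m' hβp hfan' hm
  refine ⟨γ, hγp, hβe.trans hγe, ?_⟩
  ext e
  simp only [Set.mem_setOf_eq, Set.mem_diff, Set.mem_singleton_iff]
  constructor
  · rintro ⟨he, hce⟩
    by_cases hf : ∀ j ≤ k, e ≠ s(u, x j)
    · rw [hγrest e hf] at hce
      exact ⟨⟨he, (hclass e).mp hce⟩, hf 0 (Nat.zero_le _)⟩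
    · push_neg at hf
      obtain ⟨j, hj, hej⟩ := hf
      rw [hej, hγfan j hj] at hce
      exact absurd hce (hm'c j hj)
  · rintro ⟨⟨he, hce⟩, hne⟩
    have hf : ∀ j ≤ k, e ≠ s(u, x j) := by
      intro j hj hej
      rcases Nat.eq_zero_or_pos j with rfl | hj1
      · exact hne hej
      · rw [hej] at hce
        exact hdist j hj1 (le_trans hj hk) hce.symm
    refine ⟨he, ?_⟩
    rw [hγrest e hf]
    exact (hclass e).mpr hce

end VizingFinish

/-- If the fan `X_u(α,v) = (ux₀,…,uxₚ)` is a comet (`m_α(xₚ) = α(ux_q)` for some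
`1 ≤ q ≤ p-1`), and `α(ux₀)` differs from all the other fan-edge colors and from the color
missing at `u`, then there is a coloring `α'` Kempe-equivalent to `α` whose color class of
`α(ux₀)` is that of `α` with the edge `ux₀` removed. -/
theorem stmt16 {V : Type*} [Fintype V] (G : SimpleGraph V) [DecidableRel G.Adj]
    (α : Sym2 V → Fin (G.maxDegree + 1)) (hα : IsProperEdgeColoring G α)
    (u : V) (p : ℕ) (hp : 2 ≤ p) (x : ℕ → V) (m : ℕ → Fin (G.maxDegree + 1))
    (hfan : IsFan G α u p x m)
    (q : ℕ) (hq1 : 1 ≤ q) (hq2 : q ≤ p - 1) (hcomet : m p = α s(u, x q))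
    (mu : Fin (G.maxDegree + 1)) (hmu : MissingAt G α mu u)
    (hdist : ∀ i, 1 ≤ i → i ≤ p → α s(u, x 0) ≠ α s(u, x i))
    (hdmu : α s(u, x 0) ≠ mu) :
    ∃ α' : Sym2 V → Fin (G.maxDegree + 1), IsProperEdgeColoring G α' ∧ KempeEquiv G α α' ∧
      {e | e ∈ G.edgeSet ∧ α' e = α s(u, x 0)} =
        {e | e ∈ G.edgeSet ∧ α e = α s(u, x 0)} \ {s(u, x 0)} := by
  classical
  have hq1le : q - 1 ≤ p := by omega
  have hq1lt : q - 1 < p := by omega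
  have hqle : q ≤ p := by omega
  have hedge : ∀ i, i ≤ p → s(u, x i) ∈ G.edgeSet := fun i hi =>
    (SimpleGraph.mem_edgeSet _).mpr (hfan.adj i hi)
  have hcqm : α s(u, x q) = m (q - 1) := by
    have h := hfan.succ (q - 1) hq1lt
    rwa [Nat.sub_add_cancel hq1] at h
  have hmissq1 : MissingAt G α (α s(u, x q)) (x (q - 1)) := by
    have h := hfan.missing (q - 1) hq1le
    rwa [← hcqm] at h
  have hmissp : MissingAt G α (α s(u, x q)) (x p) := by
    have h := hfan.missing p le_rfl
    rwa [hcomet] at h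
  have hmucq : α s(u, x q) ≠ mu := hmu _ (hedge q hqle) (Sym2.mem_mk_left u _)
  have hnbr : ∀ v : V, (MissingAt G α (α s(u, x q)) v ∨ MissingAt G α mu v) →
      ∀ y z, (bicolored G α (α s(u, x q)) mu).Adj v y →
        (bicolored G α (α s(u, x q)) mu).Adj v z → y = z := by
    intro v hv y z hy hz
    rw [bicolored_adj] at hy hz
    obtain ⟨⟨hey, hcy⟩, -⟩ := hy
    obtain ⟨⟨hez, hcz⟩, -⟩ := hz
    have hcc : α s(v, y) = α s(v, z) := by
      rcases hv with hv | hv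
      · have h1 : α s(v, y) = mu := by
          rcases hcy with h | h
          · exact absurd h (hv _ hey (Sym2.mem_mk_left v y))
          · exact h
        have h2 : α s(v, z) = mu := by
          rcases hcz with h | h
          · exact absurd h (hv _ hez (Sym2.mem_mk_left v z))
          · exact h
        rw [h1, h2]
      · have h1 : α s(v, y) = α s(u, x q) := by
          rcases hcy with h | h
          · exact h
          · exact absurd h (hv _ hey (Sym2.mem_mk_left v y))
        have h2 : α s(v, z) = α s(u, x q) := by
          rcases hcz with h | h
          · exact h
          · exact absurd h (hv _ hez (Sym2.mem_mk_left v z))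
        rw [h1, h2]
    exact Sym2.congr_right.mp
      (edge_unique hα hey hez (Sym2.mem_mk_left v y) (Sym2.mem_mk_left v z) hcc)
  have hdeg : ∀ v y₁ y₂ y₃, (bicolored G α (α s(u, x q)) mu).Adj v y₁ →
      (bicolored G α (α s(u, x q)) mu).Adj v y₂ →
      (bicolored G α (α s(u, x q)) mu).Adj v y₃ → y₁ = y₂ ∨ y₁ = y₃ ∨ y₂ = y₃ := by
    intro v y₁ y₂ y₃ h1 h2 h3
    rw [bicolored_adj] at h1 h2 h3
    have hcol : α s(v, y₁) = α s(v, y₂) ∨ α s(v, y₁) = α s(v, y₃) ∨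
        α s(v, y₂) = α s(v, y₃) := by
      rcases h1.1.2 with h | h <;> rcases h2.1.2 with h' | h' <;>
        rcases h3.1.2 with h'' | h'' <;> simp [h, h', h'']
    rcases hcol with h | h | h
    · exact Or.inl (Sym2.congr_right.mp (edge_unique hα h1.1.1 h2.1.1
        (Sym2.mem_mk_left _ _) (Sym2.mem_mk_left _ _) h))
    · exact Or.inr (Or.inl (Sym2.congr_right.mp (edge_unique hα h1.1.1 h3.1.1
        (Sym2.mem_mk_left _ _) (Sym2.mem_mk_left _ _) h)))
    · exact Or.inr (Or.inr (Sym2.congr_right.mp (edge_unique hα h2.1.1 h3.1.1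
        (Sym2.mem_mk_left _ _) (Sym2.mem_mk_left _ _) h)))
  have hu1 : u ≠ x (q - 1) := (hfan.adj _ hq1le).ne
  have hup : u ≠ x p := (hfan.adj p le_rfl).ne
  have h1p : x (q - 1) ≠ x p := by
    intro h
    have := hfan.inj (q - 1) hq1le p le_rfl h
    omega
  have hmj : ∀ j, j < p → j + 1 ≠ q → m j ≠ α s(u, x q) ∧ m j ≠ mu := by
    intro j hj hjq
    have hsucc := hfan.succ j hj
    constructor
    · intro h
      have heq := edge_unique hα (hedge (j + 1) (by omega)) (hedge q hqle)
        (Sym2.mem_mk_left u _) (Sym2.mem_mk_left u _) (hsucc.trans h)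
      exact hjq (hfan.inj (j + 1) (by omega) q hqle (Sym2.congr_right.mp heq))
    · rw [← hsucc]
      exact hmu _ (hedge (j + 1) (by omega)) (Sym2.mem_mk_left u _)
  have hclassgen : ∀ C' : (bicolored G α (α s(u, x q)) mu).ConnectedComponent, ∀ e,
      swapCol G α (α s(u, x q)) mu C' e = α s(u, x 0) ↔ α e = α s(u, x 0) := by
    intro C' e
    have hc0q : α s(u, x 0) ≠ α s(u, x q) := hdist q hq1 hqle
    rcases swapCol_cases (C := C') e with h | ⟨h1, h2⟩
    · rw [h]
    · constructor
      · intro hh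
        rcases h2 with h2 | h2
        · exact absurd (h2.symm.trans hh) (Ne.symm hc0q)
        · exact absurd (h2.symm.trans hh) (Ne.symm hdmu)
      · intro hh
        rcases h1 with h1 | h1
        · exact absurd (h1.symm.trans hh) (Ne.symm hc0q)
        · exact absurd (h1.symm.trans hh) (Ne.symm hdmu)
  by_cases hcase : (bicolored G α (α s(u, x q)) mu).connectedComponentMk (x (q - 1))
      = (bicolored G α (α s(u, x q)) mu).connectedComponentMk u
  · -- the component of `x p` does not contain `u`; swap it and use the full fan
    have hCp : (bicolored G α (α s(u, x q)) mu).connectedComponentMk (x p)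
        ≠ (bicolored G α (α s(u, x q)) mu).connectedComponentMk u := by
      intro hCeq
      exact no_three_leaves hdeg (hnbr u (Or.inr hmu)) (hnbr _ (Or.inl hmissq1))
        (hnbr _ (Or.inl hmissp)) hu1 hup h1p
        (SimpleGraph.ConnectedComponent.eq.mp hcase.symm)
        (SimpleGraph.ConnectedComponent.eq.mp hCeq.symm)
    set C' := (bicolored G α (α s(u, x q)) mu).connectedComponentMk (x p) with hC'def
    have huC : (bicolored G α (α s(u, x q)) mu).connectedComponentMk u ≠ C' := Ne.symm hCp
    have hswap := swapCol_isKempeSwap (C := C') hmucq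
    have hβp := swapCol_proper (C := C') hα hmucq
    have hβu : ∀ i, i ≤ p →
        swapCol G α (α s(u, x q)) mu C' s(u, x i) = α s(u, x i) :=
      fun i _ => swapCol_untouched huC (Sym2.mem_mk_left u _)
    have hfan' : IsFan G (swapCol G α (α s(u, x q)) mu C') u p x
        (Function.update m p mu) := by
      refine ⟨hfan.adj, hfan.inj, ?_, ?_⟩
      · intro j hj
        by_cases hjp : j = p
        · subst hjp
          rw [Function.update_self]
          exact swapCol_missing_swap hmucq hC'def.symm hmissp
        · rw [Function.update_of_ne hjp]
          have hjlt : j < p := lt_of_le_of_ne hj hjp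
          by_cases hjq : j + 1 = q
          · have hjq1 : j = q - 1 := by omega
            subst hjq1
            have hx1C : (bicolored G α (α s(u, x q)) mu).connectedComponentMk (x (q - 1))
                ≠ C' := by
              rw [hcase]; exact huC
            exact swapCol_missing_untouched hx1C (hfan.missing (q - 1) hq1le)
          · obtain ⟨hne1, hne2⟩ := hmj j hjlt hjq
            exact swapCol_missing_of_ne hmucq (hfan.missing j hj) hne1 hne2
      · intro j hjlt
        rw [hβu (j + 1) (by omega), Function.update_of_ne (by omega : j ≠ p)]
        exact hfan.succ j hjlt
    have hm' : MissingAt G (swapCol G α (α s(u, x q)) mu C')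
        (Function.update m p mu p) u := by
      rw [Function.update_self]
      exact swapCol_missing_untouched huC hmu
    have hm'c : ∀ j ≤ p, Function.update m p mu j ≠ α s(u, x 0) := by
      intro j hj
      by_cases hjp : j = p
      · subst hjp
        rw [Function.update_self]
        exact Ne.symm hdmu
      · rw [Function.update_of_ne hjp, ← hfan.succ j (lt_of_le_of_ne hj hjp)]
        exact Ne.symm (hdist (j + 1) (by omega) (by omega))
    exact vizing_finish hα hdist le_rfl hβp (Relation.ReflTransGen.single hswap)
      hfan' hm' hm'c (hclassgen C')
  · -- swap the component of `x (q-1)` and use the shortened fan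
    set C' := (bicolored G α (α s(u, x q)) mu).connectedComponentMk (x (q - 1)) with hC'def
    have huC : (bicolored G α (α s(u, x q)) mu).connectedComponentMk u ≠ C' := Ne.symm hcase
    have hswap := swapCol_isKempeSwap (C := C') hmucq
    have hβp := swapCol_proper (C := C') hα hmucq
    have hβu : ∀ i, i ≤ p →
        swapCol G α (α s(u, x q)) mu C' s(u, x i) = α s(u, x i) :=
      fun i _ => swapCol_untouched huC (Sym2.mem_mk_left u _)
    have hfan' : IsFan G (swapCol G α (α s(u, x q)) mu C') u (q - 1) x
        (Function.update m (q - 1) mu) := by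
      refine ⟨fun i hi => hfan.adj i (le_trans hi hq1le),
        fun i hi j hj h => hfan.inj i (le_trans hi hq1le) j (le_trans hj hq1le) h, ?_, ?_⟩
      · intro j hj
        by_cases hjq : j = q - 1
        · subst hjq
          rw [Function.update_self]
          exact swapCol_missing_swap hmucq hC'def.symm hmissq1
        · rw [Function.update_of_ne hjq]
          have hjlt : j < q - 1 := lt_of_le_of_ne hj hjq
          obtain ⟨hne1, hne2⟩ := hmj j (by omega) (by omega)
          exact swapCol_missing_of_ne hmucq (hfan.missing j (by omega)) hne1 hne2
      · intro j hjlt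
        rw [hβu (j + 1) (by omega), Function.update_of_ne (by omega : j ≠ q - 1)]
        exact hfan.succ j (by omega)
    have hm' : MissingAt G (swapCol G α (α s(u, x q)) mu C')
        (Function.update m (q - 1) mu (q - 1)) u := by
      rw [Function.update_self]
      exact swapCol_missing_untouched huC hmu
    have hm'c : ∀ j ≤ q - 1, Function.update m (q - 1) mu j ≠ α s(u, x 0) := by
      intro j hj
      by_cases hjq : j = q - 1
      · subst hjq
        rw [Function.update_self]
        exact Ne.symm hdmu
      · rw [Function.update_of_ne hjq, ← hfan.succ j (by omega)]
        exact Ne.symm (hdist (j + 1) (by omega) (by omega))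
    exact vizing_finish hα hdist hq1le hβp (Relation.ReflTransGen.single hswap)
      hfan' hm' hm'c (hclassgen C')
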